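/- Let J be a continuous nonnegative symmetric kernel on ℝ^N of unit mass, κ > 0, and let z̄ : ℝ^N → ℝ be a bounded continuous nonnegative function satisfying (J⋆z̄)(x) − z̄(x) − κ z̄(x) ≥ 0 for all x ∈ ℝ^N. If J is compactly supported, then z̄ ≡ 0. -/

import Mathlib

open MeasureTheory Real

noncomputable section

theorem stmt_8 (N : ℕ) (κ : ℝ) (hκ : 0 < κ)
    (J z : EuclideanSpace ℝ (Fin N) → ℝ)
    (hJc : Continuous J) (hJpos : ∀ x, 0 ≤ J x) (hJsym : ∀ x, J (-x) = J x)
    (hJint : Integrable J) (hJmass : ∫ x, J x = 1)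
    (hJcs : HasCompactSupport J)
    (hzc : Continuous z) (hzpos : ∀ x, 0 ≤ z x) (hzbd : ∃ C, ∀ x, z x ≤ C)
    (hineq : ∀ x, 0 ≤ (∫ y, J (x - y) * z y) - z x - κ * z x) :
    ∀ x, z x = 0 := by
  obtain ⟨C, hC⟩ := hzbd
  have hbdd : BddAbove (Set.range z) := ⟨C, by rintro _ ⟨x, rfl⟩; exact hC x⟩
  set M : ℝ := ⨆ x, z x with hM
  have hzM : ∀ x, z x ≤ M := fun x => le_ciSup hbdd x
  have hM0 : 0 ≤ M := le_trans (hzpos 0) (hzM 0)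
  -- key: for all x, (1+κ) * z x ≤ M
  have key : ∀ x, (1 + κ) * z x ≤ M := by
    intro x
    have hJx : Integrable (fun y => J (x - y)) := hJint.comp_sub_left x
    have hJxmass : (∫ y, J (x - y)) = 1 := by
      exact (integral_sub_left_eq_self J volume x).trans hJmass
    have hzint : Integrable (fun y => J (x - y) * z y) := by
      have := hJx.bdd_mul hzc.aestronglyMeasurable
        (c := C) (Filter.Eventually.of_forall fun y => by
          rw [Real.norm_eq_abs, abs_of_nonneg (hzpos y)]; exact hC y)
      simpa [mul_comm] using this
    have hle : (∫ y, J (x - y) * z y) ≤ M := by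
      calc (∫ y, J (x - y) * z y) ≤ ∫ y, J (x - y) * M := by
            apply integral_mono hzint (hJx.mul_const M)
            intro y
            exact mul_le_mul_of_nonneg_left (hzM y) (hJpos _)
        _ = M := by rw [integral_mul_const, hJxmass, one_mul]
    have := hineq x
    nlinarith
  have hMle : M ≤ M / (1 + κ) := by
    apply ciSup_le
    intro x
    rw [le_div_iff₀ (by linarith)]
    linarith [key x]
  have hMzero : M ≤ 0 := by
    rw [le_div_iff₀ (by linarith)] at hMle
    nlinarith
  intro x
  exact le_antisymm (le_trans (hzM x) hMzero) (hzpos x)
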